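/- Let R : ℝ^{2n} × ℝ^{2n} → ℝ be a bilinear form that is antisymmetric in the sense ⟨R(x,y)z, w⟩ = −⟨R(y,x)z,w⟩ and satisfies the symmetries of a Riemannian curvature tensor (antisymmetry in the first two and last two slots, pair symmetry, first Bianchi identity). Let J be an orthogonal complex structure on ℝ^{2n} (J² = −1, J orthogonal) and suppose R is J-invariant of type (1,1): R(Jx, Jy) = R(x,y). Then for the standard Gaussian measure, ∫_{ℝ^{2n}} ⟨R(Z, JZ)Z, JZ⟩ exp(−|Z|²/2) dZ = −4 (2π)^n · r, where r = −Σ_{j,k} ⟨R(e_j, e_k)e_j, e_k⟩ is the scalar curvature contraction and {e_j} is an orthonormal basis. -/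

import Mathlib

open MeasureTheory Finset

namespace Stmt5Aux

open Real

/-! ### One-dimensional Gaussian moments -/

lemma integrable_pow_gauss (k : ℕ) :
    Integrable (fun t : ℝ => t ^ k * Real.exp (-t ^ 2 / 2)) := by
  have hk : (-1 : ℝ) < (k : ℝ) := lt_of_lt_of_le (by norm_num) (Nat.cast_nonneg k)
  have := integrable_rpow_mul_exp_neg_mul_sq (b := (1/2 : ℝ)) (by norm_num) hk
  simp only [Real.rpow_natCast] at this
  convert this using 2 with t
  ring_nf

lemma mom0 : (∫ t : ℝ, Real.exp (-t ^ 2 / 2)) = Real.sqrt (2 * π) := by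
  have h := integral_gaussian (1/2)
  simp only [show ∀ x:ℝ, -(1/2:ℝ)*x^2 = -x^2/2 from fun x => by ring] at h
  rw [h]
  rw [div_div_eq_mul_div, div_one, mul_comm]

lemma mom_odd (k : ℕ) (hk : Odd k) :
    (∫ t : ℝ, t ^ k * Real.exp (-t ^ 2 / 2)) = 0 := by
  have h := integral_neg_eq_self (fun t : ℝ => t ^ k * Real.exp (-t ^ 2 / 2)) volume
  simp only [hk.neg_pow, neg_sq, neg_mul, integral_neg] at h
  linarith [h]

lemma mom_even (k : ℕ) (hk : Even k) :
    (∫ t : ℝ, t ^ k * Real.exp (-t ^ 2 / 2)) =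
      2 * ((1/2 : ℝ) ^ (-(((k:ℝ) + 1)) / 2) * (1 / 2) * Real.Gamma (((k:ℝ) + 1) / 2)) := by
  have hkc : (-1 : ℝ) < (k : ℝ) := lt_of_lt_of_le (by norm_num) (Nat.cast_nonneg k)
  have h1 : ∀ t : ℝ, t ^ k * Real.exp (-t ^ 2 / 2)
      = (fun u : ℝ => u ^ k * Real.exp (-(1/2:ℝ) * u ^ 2)) |t| := by
    intro t
    simp only [hk.pow_abs, sq_abs]
    ring_nf
  have h2 := integral_rpow_mul_exp_neg_mul_rpow (p := 2) (q := (k:ℝ)) (b := (1/2:ℝ))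
    (by norm_num) hkc (by norm_num)
  have h3 : (∫ x in Set.Ioi (0:ℝ), x ^ k * Real.exp (-(1/2:ℝ) * x ^ 2))
      = ∫ x in Set.Ioi (0:ℝ), x ^ (k:ℝ) * Real.exp (-(1/2:ℝ) * x ^ (2:ℝ)) := by
    refine setIntegral_congr_fun measurableSet_Ioi (fun x hx => ?_)
    rw [Real.rpow_natCast, Real.rpow_two]
  calc (∫ t : ℝ, t ^ k * Real.exp (-t ^ 2 / 2))
      = ∫ t : ℝ, (fun u : ℝ => u ^ k * Real.exp (-(1/2:ℝ) * u ^ 2)) |t| :=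
        integral_congr_ae (Filter.Eventually.of_forall h1)
    _ = 2 * ∫ x in Set.Ioi (0:ℝ), x ^ k * Real.exp (-(1/2:ℝ) * x ^ 2) :=
        integral_comp_abs (f := fun u : ℝ => u ^ k * Real.exp (-(1/2:ℝ) * u ^ 2))
    _ = 2 * ((1/2 : ℝ) ^ (-(((k:ℝ) + 1)) / 2) * (1 / 2) * Real.Gamma (((k:ℝ) + 1) / 2)) := by
        rw [h3, h2]

lemma rpow_half_neg (a : ℝ) : ((1:ℝ)/2) ^ (-a) = (2:ℝ) ^ a := by
  rw [Real.rpow_neg (by norm_num), show ((1:ℝ)/2) = 2⁻¹ by norm_num,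
    Real.inv_rpow (by norm_num), inv_inv]

lemma two_rpow_half : (2:ℝ) ^ ((1:ℝ)/2) = Real.sqrt 2 := by
  rw [Real.sqrt_eq_rpow]

lemma gamma32 : Real.Gamma (3/2) = Real.sqrt π / 2 := by
  have := Real.Gamma_add_one (s := (1/2:ℝ)) (by norm_num)
  rw [Real.Gamma_one_half_eq] at this
  norm_num at this ⊢
  linarith [this]

lemma gamma52 : Real.Gamma (5/2) = 3 * Real.sqrt π / 4 := by
  have := Real.Gamma_add_one (s := (3/2:ℝ)) (by norm_num)
  rw [gamma32] at this
  norm_num at this ⊢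
  rw [this]
  ring

lemma two_rpow_32 : (2:ℝ) ^ ((3:ℝ)/2) = 2 * Real.sqrt 2 := by
  rw [show ((3:ℝ)/2) = 1 + 1/2 by ring, Real.rpow_add (by norm_num), Real.rpow_one,
    two_rpow_half]

lemma two_rpow_52 : (2:ℝ) ^ ((5:ℝ)/2) = 4 * Real.sqrt 2 := by
  rw [show ((5:ℝ)/2) = 2 + 1/2 by ring, Real.rpow_add (by norm_num), two_rpow_half,
    show ((2:ℝ) ^ (2:ℝ)) = ((2:ℝ) ^ (2:ℕ)) by rw [← Real.rpow_natCast]; norm_num]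
  norm_num

lemma sqrt2pi : Real.sqrt (2*π) = Real.sqrt 2 * Real.sqrt π := Real.sqrt_mul (by norm_num) _

lemma mom2 : (∫ t : ℝ, t ^ 2 * Real.exp (-t ^ 2 / 2)) = Real.sqrt (2 * π) := by
  rw [mom_even 2 (by decide)]
  rw [show (-(((2:ℕ):ℝ) + 1)) / 2 = -((3:ℝ)/2) by norm_num, rpow_half_neg, two_rpow_32,
    show ((((2:ℕ):ℝ)) + 1) / 2 = 3/2 by norm_num, gamma32, sqrt2pi]
  ring

lemma mom4 : (∫ t : ℝ, t ^ 4 * Real.exp (-t ^ 2 / 2)) = 3 * Real.sqrt (2 * π) := by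
  rw [mom_even 4 (by decide)]
  rw [show (-(((4:ℕ):ℝ) + 1)) / 2 = -((5:ℝ)/2) by norm_num, rpow_half_neg, two_rpow_52,
    show ((((4:ℕ):ℝ)) + 1) / 2 = 5/2 by norm_num, gamma52, sqrt2pi]
  ring

/-! ### Wick-type combinatorics -/

def cnt {N : ℕ} (a b c d i : Fin N) : ℕ :=
  (if a = i then 1 else 0) + (if b = i then 1 else 0) +
    (if c = i then 1 else 0) + (if d = i then 1 else 0)

def μm : ℕ → ℝ := fun k => if k = 1 then 0 else if k = 3 then 0 else if k = 4 then 3 else 1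

lemma prod_mu_zero {N : ℕ} (f : Fin N → ℕ) (x : Fin N) (hx : μm (f x) = 0) :
    (∏ i, μm (f i)) = 0 := Finset.prod_eq_zero (Finset.mem_univ x) hx

lemma comb {N : ℕ} (a b c d : Fin N) :
    (∏ i, μm (cnt a b c d i)) =
      (if a = b then (1:ℝ) else 0) * (if c = d then (1:ℝ) else 0) +
      (if a = c then (1:ℝ) else 0) * (if b = d then (1:ℝ) else 0) +
      (if a = d then (1:ℝ) else 0) * (if b = c then (1:ℝ) else 0) := by
  by_cases hab : a = b
  · by_cases hac : a = c
    · by_cases had : a = d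
      · simp only [← hab, ← hac, ← had]
        rw [Finset.prod_eq_single_of_mem a (Finset.mem_univ a)
          (fun i _ hia => by simp [cnt, μm, Ne.symm hia])]
        simp [cnt, μm]
        norm_num
      · simp only [← hab, ← hac]
        rw [prod_mu_zero _ d (by simp [cnt, μm, had])]
        simp [had]
    · by_cases hcd : c = d
      · simp only [← hab, ← hcd]
        rw [Finset.prod_eq_one fun i _ => ?_]
        · simp [hac]
        · by_cases h1 : a = i <;> by_cases h2 : c = i
          · exact absurd (h1.trans h2.symm) hac
          all_goals simp [cnt, μm, h1, h2]
      · by_cases had : a = d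
        · simp only [← hab, ← had]
          rw [prod_mu_zero _ c (by simp [cnt, μm, hac])]
          simp [hac, Ne.symm hac]
        · simp only [← hab]
          rw [prod_mu_zero _ c (by simp [cnt, μm, hac, Ne.symm hcd])]
          simp [hac, hcd, had]
  · by_cases hac : a = c
    · by_cases hbd : b = d
      · simp only [← hac, ← hbd]
        rw [Finset.prod_eq_one fun i _ => ?_]
        · simp [hab, Ne.symm hab]
        · by_cases h1 : a = i <;> by_cases h2 : b = i
          · exact absurd (h1.trans h2.symm) hab
          all_goals simp [cnt, μm, h1, h2]
      · by_cases had : a = d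
        · simp only [← hac, ← had]
          rw [prod_mu_zero _ b (by simp [cnt, μm, hab])]
          simp [hab, Ne.symm hab]
        · simp only [← hac]
          rw [prod_mu_zero _ b (by simp [cnt, μm, hab, Ne.symm hbd])]
          simp [hab, hbd, had, Ne.symm hab]
    · by_cases hbc : b = c
      · by_cases had : a = d
        · simp only [← hbc, ← had]
          rw [Finset.prod_eq_one fun i _ => ?_]
          · simp [hab, Ne.symm hab]
          · by_cases h1 : a = i <;> by_cases h2 : b = i
            · exact absurd (h1.trans h2.symm) hab
            all_goals simp [cnt, μm, h1, h2]
        · by_cases hbd : b = d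
          · simp only [← hbc, ← hbd]
            rw [prod_mu_zero _ a (by simp [cnt, μm, Ne.symm hab])]
            simp [hab, had]
          · simp only [← hbc]
            rw [prod_mu_zero _ a (by simp [cnt, μm, Ne.symm hab, Ne.symm had])]
            simp [hab, had, hbd]
      · by_cases had : a = d
        · simp only [← had]
          rw [prod_mu_zero _ b (by simp [cnt, μm, hab, Ne.symm hbc])]
          simp [hab, hac, hbc, Ne.symm hab, Ne.symm hac, Ne.symm hbc]
        · by_cases hbd : b = d
          · simp only [← hbd]
            rw [prod_mu_zero _ c (by simp [cnt, μm, hac, hbc])]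
            simp [hab, hac, hbc, had, Ne.symm hbc]
          · by_cases hcd : c = d
            · simp only [← hcd]
              rw [prod_mu_zero _ a (by simp [cnt, μm, Ne.symm hab, Ne.symm hac])]
              simp [hab, hac, hbc, had, hbd]
            · rw [prod_mu_zero _ a (by simp [cnt, μm, Ne.symm hab, Ne.symm hac, Ne.symm had])]
              simp [hab, hac, hbc, had, hbd, hcd]

/-! ### Gaussian fourth moments on a finite product space -/

lemma mom_val (k : ℕ) (hk : k ≤ 4) :
    (∫ t : ℝ, t ^ k * Real.exp (-t ^ 2 / 2)) = Real.sqrt (2 * π) * μm k := by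
  interval_cases k
  · simpa [μm] using mom0
  · simpa [μm] using mom_odd 1 odd_one
  · simp [μm, mom2]
  · simp [μm, mom_odd 3 (by decide)]
  · simp [μm, mom4]; ring

lemma key_prod {N : ℕ} (a b c d : Fin N) (x : Fin N → ℝ) :
    (x a * x b * x c * x d) * ∏ i, Real.exp (-(x i) ^ 2 / 2)
      = ∏ i, (x i ^ cnt a b c d i * Real.exp (-(x i) ^ 2 / 2)) := by
  rw [Finset.prod_mul_distrib]
  congr 1
  simp only [cnt, pow_add]
  rw [Finset.prod_mul_distrib, Finset.prod_mul_distrib, Finset.prod_mul_distrib]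
  have h : ∀ y : Fin N, (∏ i, x i ^ (if y = i then 1 else 0)) = x y := by
    intro y
    rw [show (fun i => x i ^ (if y = i then 1 else 0))
        = fun i => (if y = i then x i else 1) from funext fun i => by split <;> simp]
    rw [Finset.prod_ite_eq]
    simp
  rw [h a, h b, h c, h d]

lemma integrable_mono4 {N : ℕ} (a b c d : Fin N) :
    Integrable (fun x : Fin N → ℝ =>
      (x a * x b * x c * x d) * ∏ i, Real.exp (-(x i) ^ 2 / 2)) := by
  simp only [key_prod]
  exact Integrable.fintype_prod_dep fun i => integrable_pow_gauss (cnt a b c d i)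

lemma cnt_le4 {N : ℕ} (a b c d i : Fin N) : cnt a b c d i ≤ 4 := by
  unfold cnt; split <;> split <;> split <;> split <;> norm_num

lemma pi_mom {N : ℕ} (a b c d : Fin N) :
    (∫ x : Fin N → ℝ, (x a * x b * x c * x d) * ∏ i, Real.exp (-(x i) ^ 2 / 2))
      = Real.sqrt (2 * π) ^ N *
        ((if a = b then (1:ℝ) else 0) * (if c = d then (1:ℝ) else 0) +
         (if a = c then (1:ℝ) else 0) * (if b = d then (1:ℝ) else 0) +
         (if a = d then (1:ℝ) else 0) * (if b = c then (1:ℝ) else 0)) := by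
  simp only [key_prod]
  rw [MeasureTheory.integral_fintype_prod_volume_eq_prod
    (f := fun i t => t ^ cnt a b c d i * Real.exp (-t ^ 2 / 2))]
  rw [Finset.prod_congr rfl fun i _ => mom_val _ (cnt_le4 a b c d i),
    Finset.prod_mul_distrib, Finset.prod_const, comb, Finset.card_univ, Fintype.card_fin]

/-! ### Transfer to Euclidean space -/

lemma norm_exp_eq {N : ℕ} (Z : EuclideanSpace ℝ (Fin N)) :
    Real.exp (-‖Z‖ ^ 2 / 2) = ∏ i, Real.exp (-(Z i) ^ 2 / 2) := by
  have h : ‖Z‖ ^ 2 = ∑ i, (Z i) ^ 2 := by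
    rw [EuclideanSpace.norm_eq, Real.sq_sqrt (by positivity)]
    exact Finset.sum_congr rfl fun i _ => by rw [Real.norm_eq_abs, sq_abs]
  rw [h, show (-∑ i, Z i ^ 2) / 2 = ∑ i, -Z i ^ 2 / 2 from by
    rw [← Finset.sum_neg_distrib, ← Finset.sum_div]]
  exact Real.exp_sum _ _

lemma euclid_transfer {N : ℕ} (g : (Fin N → ℝ) → ℝ) :
    (∫ Z : EuclideanSpace ℝ (Fin N), g (fun i => Z i)) = ∫ x : Fin N → ℝ, g x :=
  (EuclideanSpace.volume_preserving_symm_measurableEquiv_toLp (Fin N)).integral_comp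
    (MeasurableEquiv.toLp 2 (Fin N → ℝ)).symm.measurableEmbedding g

lemma euclid_mom {N : ℕ} (a b c d : Fin N) :
    (∫ Z : EuclideanSpace ℝ (Fin N), (Z a * Z b * Z c * Z d) * Real.exp (-‖Z‖ ^ 2 / 2))
      = Real.sqrt (2 * π) ^ N *
        ((if a = b then (1:ℝ) else 0) * (if c = d then (1:ℝ) else 0) +
         (if a = c then (1:ℝ) else 0) * (if b = d then (1:ℝ) else 0) +
         (if a = d then (1:ℝ) else 0) * (if b = c then (1:ℝ) else 0)) := by
  rw [← pi_mom a b c d, ← euclid_transfer (fun x : Fin N → ℝ =>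
    (x a * x b * x c * x d) * ∏ i, Real.exp (-(x i) ^ 2 / 2))]
  refine integral_congr_ae (Filter.Eventually.of_forall fun Z => ?_)
  simp only [norm_exp_eq]

lemma integrable_mono4_euclid {N : ℕ} (a b c d : Fin N) :
    Integrable (fun Z : EuclideanSpace ℝ (Fin N) =>
      (Z a * Z b * Z c * Z d) * Real.exp (-‖Z‖ ^ 2 / 2)) := by
  have h := integrable_mono4 a b c d
  have h2 := ((EuclideanSpace.volume_preserving_symm_measurableEquiv_toLp (Fin N)).integrable_comp_emb
    (MeasurableEquiv.toLp 2 (Fin N → ℝ)).symm.measurableEmbedding).mpr h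
  apply h2.congr
  exact Filter.Eventually.of_forall fun Z => by
    simp only [Function.comp]
    rw [norm_exp_eq]
    rfl

/-! ### Sum reordering -/

variable {N : ℕ}

lemma permA {M : Type*} [AddCommMonoid M] (f : Fin N → Fin N → Fin N → Fin N → M) :
    (∑ i, ∑ j, ∑ k, ∑ l, f j k i l) = ∑ i, ∑ j, ∑ k, ∑ l, f i j k l := by
  rw [Finset.sum_comm]
  exact Finset.sum_congr rfl fun _ _ => Finset.sum_comm

lemma permB {M : Type*} [AddCommMonoid M] (f : Fin N → Fin N → Fin N → Fin N → M) :
    (∑ i, ∑ j, ∑ k, ∑ l, f k i j l) = ∑ i, ∑ j, ∑ k, ∑ l, f i j k l := by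
  calc (∑ i, ∑ j, ∑ k, ∑ l, f k i j l) = ∑ a, ∑ b, ∑ c, ∑ d, f b a c d :=
        Finset.sum_congr rfl fun _ _ => Finset.sum_comm
    _ = _ := Finset.sum_comm

lemma permC {M : Type*} [AddCommMonoid M] (f : Fin N → Fin N → Fin N → Fin N → M) :
    (∑ i, ∑ j, ∑ k, ∑ l, f i j k l) = ∑ k, ∑ l, ∑ i, ∑ j, f i j k l := by
  calc (∑ i, ∑ j, ∑ k, ∑ l, f i j k l)
      = ∑ a, ∑ c, ∑ b, ∑ d, f a b c d := Finset.sum_congr rfl fun _ _ => Finset.sum_comm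
    _ = ∑ c, ∑ a, ∑ b, ∑ d, f a b c d := Finset.sum_comm
    _ = ∑ c, ∑ a, ∑ d, ∑ b, f a b c d :=
        Finset.sum_congr rfl fun _ _ => Finset.sum_congr rfl fun _ _ => Finset.sum_comm
    _ = ∑ c, ∑ d, ∑ a, ∑ b, f a b c d := Finset.sum_congr rfl fun _ _ => Finset.sum_comm

lemma sum6_reorder {M : Type*} [AddCommMonoid M]
    (f : Fin N → Fin N → Fin N → Fin N → Fin N → Fin N → M) :
    (∑ i, ∑ j, ∑ k, ∑ l, ∑ a, ∑ b, f i j k l a b)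
      = ∑ i, ∑ l, ∑ a, ∑ b, ∑ j, ∑ k, f i j k l a b := by
  have h1 : (∑ i, ∑ j, ∑ k, ∑ l, ∑ a, ∑ b, f i j k l a b)
      = ∑ p : Fin N × Fin N × Fin N × Fin N × Fin N × Fin N,
          f p.1 p.2.1 p.2.2.1 p.2.2.2.1 p.2.2.2.2.1 p.2.2.2.2.2 := by
    simp only [Fintype.sum_prod_type]
  have h2 : (∑ i, ∑ l, ∑ a, ∑ b, ∑ j, ∑ k, f i j k l a b)
      = ∑ p : Fin N × Fin N × Fin N × Fin N × Fin N × Fin N,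
          f p.1 p.2.2.2.2.1 p.2.2.2.2.2 p.2.1 p.2.2.1 p.2.2.2.1 := by
    simp only [Fintype.sum_prod_type]
  rw [h1, h2]
  exact Fintype.sum_equiv
    ⟨fun p => (p.1, p.2.2.2.1, p.2.2.2.2.1, p.2.2.2.2.2, p.2.1, p.2.2.1),
     fun p => (p.1, p.2.2.2.2.1, p.2.2.2.2.2, p.2.1, p.2.2.1, p.2.2.2.1),
     by rintro ⟨a,b,c,d,e,g⟩; rfl, by rintro ⟨a,b,c,d,e,g⟩; rfl⟩ _ _
    (by rintro ⟨a,b,c,d,e,g⟩; rfl)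

/-! ### The algebraic contraction identities -/

section Alg
variable (R : Fin N → Fin N → Fin N → Fin N → ℝ) (J : Matrix (Fin N) (Fin N) ℝ)

lemma entry_JJT (hJorth : J.transpose * J = 1) (j l : Fin N) :
    (∑ m, J j m * J l m) = if j = l then (1:ℝ) else 0 := by
  have h := mul_eq_one_comm.mp hJorth
  have := congrFun (congrFun h j) l
  rw [Matrix.mul_apply] at this
  simp only [Matrix.transpose_apply] at this
  rw [this, Matrix.one_apply]

lemma entry_JJ (hJsq : J * J = -1) (a i : Fin N) :
    (∑ j, J a j * J j i) = -(if a = i then (1:ℝ) else 0) := by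
  have := congrFun (congrFun hJsq a) i
  rw [Matrix.mul_apply] at this
  rw [this, Matrix.neg_apply, Matrix.one_apply]

lemma entry_anti (hJorth : J.transpose * J = 1) (hJsq : J * J = -1) (i j : Fin N) :
    J i j = - J j i := by
  have hT : J.transpose = -J := by
    have h1 : J * -J = 1 := by rw [Matrix.mul_neg, hJsq]; simp
    calc J.transpose = J.transpose * (J * -J) := by rw [h1, Matrix.mul_one]
      _ = (J.transpose * J) * -J := by rw [Matrix.mul_assoc]
      _ = -J := by rw [hJorth, Matrix.one_mul]
  have := congrFun (congrFun hT j) i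
  simpa [Matrix.transpose_apply, Matrix.neg_apply] using this

lemma hA_lemma (hJorth : J.transpose * J = 1) (hJsq : J * J = -1)
    (h11 : ∀ i j k l, (∑ a, ∑ b, J a i * J b j * R a b k l) = R i j k l) :
    (∑ i, ∑ j, ∑ k, ∑ l, -(R j k i l * J j i * J l k)) = ∑ j, ∑ k, R j k j k := by
  have step1 : (∑ i, ∑ j, ∑ k, ∑ l, -(R j k i l * J j i * J l k))
      = ∑ i, ∑ j, ∑ k, ∑ l, ∑ a, ∑ b,
          -(J a j * J b k * R a b i l * J j i * J l k) := by
    refine Finset.sum_congr rfl fun i _ => Finset.sum_congr rfl fun j _ =>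
      Finset.sum_congr rfl fun k _ => Finset.sum_congr rfl fun l _ => ?_
    rw [← h11 j k i l]
    simp only [Finset.sum_mul, ← Finset.sum_neg_distrib]
  have step2 : (∑ j, ∑ k, R j k j k)
      = ∑ i, ∑ l, ∑ a, ∑ b, ∑ j, ∑ k,
          -(J a j * J b k * R a b i l * J j i * J l k) := by
    have e1 : (∑ j, ∑ k, R j k j k)
        = ∑ i, ∑ l, ∑ a, ∑ b,
            (if a = i then (1:ℝ) else 0) * ((if b = l then (1:ℝ) else 0) * R a b i l) := by
      simp only [ite_mul, mul_ite, one_mul, zero_mul, mul_one, mul_zero,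
        Finset.sum_ite_irrel, Finset.sum_const_zero, Finset.sum_ite_eq, Finset.sum_ite_eq',
        Finset.mem_univ, if_true]
    rw [e1]
    refine Finset.sum_congr rfl fun i _ => Finset.sum_congr rfl fun l _ =>
      Finset.sum_congr rfl fun a _ => Finset.sum_congr rfl fun b _ => ?_
    rw [show (if a = i then (1:ℝ) else 0) = -(∑ j, J a j * J j i) from by
          rw [entry_JJ J hJsq a i]; ring,
        ← entry_JJT J hJorth b l]
    simp only [Finset.sum_mul, Finset.mul_sum, neg_mul, mul_neg, ← Finset.sum_neg_distrib]
    rw [Finset.sum_comm]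
    refine Finset.sum_congr rfl fun j _ => Finset.sum_congr rfl fun k _ => ?_
    ring
  rw [step1, sum6_reorder, step2]

lemma hS1_lemma (hasym1 : ∀ i j k l, R i j k l = - R j i k l)
    (hbianchi : ∀ i j k l, R i j k l + R j k i l + R k i j l = 0)
    (hJorth : J.transpose * J = 1) (hJsq : J * J = -1)
    (h11 : ∀ i j k l, (∑ a, ∑ b, J a i * J b j * R a b k l) = R i j k l) :
    (∑ i, ∑ j, ∑ k, ∑ l, R i j k l * J j i * J l k) = 2 * ∑ j, ∑ k, R j k j k := by
  have hsplit : (∑ i, ∑ j, ∑ k, ∑ l, R i j k l * J j i * J l k)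
      = (∑ i, ∑ j, ∑ k, ∑ l, -(R j k i l * J j i * J l k))
        + ∑ i, ∑ j, ∑ k, ∑ l, -(R k i j l * J j i * J l k) := by
    simp only [← Finset.sum_add_distrib]
    refine Finset.sum_congr rfl fun i _ => Finset.sum_congr rfl fun j _ =>
      Finset.sum_congr rfl fun k _ => Finset.sum_congr rfl fun l _ => ?_
    rw [show R i j k l = -R j k i l - R k i j l from by linarith [hbianchi i j k l]]
    ring
  have hB : (∑ i, ∑ j, ∑ k, ∑ l, -(R k i j l * J j i * J l k))
      = ∑ i, ∑ j, ∑ k, ∑ l, -(R j k i l * J j i * J l k) := by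
    calc (∑ i, ∑ j, ∑ k, ∑ l, -(R k i j l * J j i * J l k))
        = ∑ i, ∑ j, ∑ k, ∑ l, -(R i k j l * J i j * J l k) := by
          refine Finset.sum_congr rfl fun i _ => Finset.sum_congr rfl fun j _ =>
            Finset.sum_congr rfl fun k _ => Finset.sum_congr rfl fun l _ => ?_
          rw [hasym1 k i j l, entry_anti J hJorth hJsq i j]
          ring
      _ = _ := Finset.sum_comm
  rw [hsplit, hB, hA_lemma R J hJorth hJsq h11]
  ring

lemma hS2_lemma (hJorth : J.transpose * J = 1) :
    (∑ i, ∑ j, ∑ l, ∑ m, R i j i l * J j m * J l m) = ∑ j, ∑ k, R j k j k := by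
  have e1 : (∑ i, ∑ j, ∑ l, ∑ m, R i j i l * J j m * J l m)
      = ∑ i, ∑ j, ∑ l, R i j i l * (if j = l then (1:ℝ) else 0) := by
    refine Finset.sum_congr rfl fun i _ => Finset.sum_congr rfl fun j _ =>
      Finset.sum_congr rfl fun l _ => ?_
    rw [← entry_JJT J hJorth j l, Finset.mul_sum]
    exact Finset.sum_congr rfl fun m _ => by ring
  rw [e1]
  simp only [mul_ite, mul_one, mul_zero, Finset.sum_ite_eq, Finset.mem_univ, if_true]

lemma hE_lemma (hJorth : J.transpose * J = 1) (hJsq : J * J = -1)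
    (h11 : ∀ i j k l, (∑ a, ∑ b, J a i * J b j * R a b k l) = R i j k l) :
    (∑ i, ∑ j, ∑ k, ∑ l, R k i j l * J j k * J l i) = ∑ j, ∑ k, R j k j k := by
  calc (∑ i, ∑ j, ∑ k, ∑ l, R k i j l * J j k * J l i)
      = ∑ i, ∑ j, ∑ k, ∑ l, R i j k l * J k i * J l j :=
        permB (f := fun a b c d => R a b c d * J c a * J d b)
    _ = ∑ k, ∑ l, ∑ i, ∑ j, R i j k l * J k i * J l j :=
        permC (f := fun a b c d => R a b c d * J c a * J d b)
    _ = ∑ k, ∑ l, ∑ i, ∑ j, J i k * J j l * R i j k l := by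
        refine Finset.sum_congr rfl fun k _ => Finset.sum_congr rfl fun l _ =>
          Finset.sum_congr rfl fun i _ => Finset.sum_congr rfl fun j _ => ?_
        rw [entry_anti J hJorth hJsq k i, entry_anti J hJorth hJsq l j]
        ring
    _ = ∑ k, ∑ l, R k l k l := by
        refine Finset.sum_congr rfl fun k _ => Finset.sum_congr rfl fun l _ => ?_
        exact h11 k l k l
    _ = ∑ j, ∑ k, R j k j k := rfl

lemma hS3_lemma (hasym1 : ∀ i j k l, R i j k l = - R j i k l)
    (hbianchi : ∀ i j k l, R i j k l + R j k i l + R k i j l = 0)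
    (hJorth : J.transpose * J = 1) (hJsq : J * J = -1)
    (h11 : ∀ i j k l, (∑ a, ∑ b, J a i * J b j * R a b k l) = R i j k l) :
    (∑ i, ∑ j, ∑ k, ∑ l, R i j k l * J j k * J l i) = ∑ j, ∑ k, R j k j k := by
  have hC : (∑ i, ∑ j, ∑ k, ∑ l, R j k i l * J j k * J l i)
      = -(∑ i, ∑ j, ∑ k, ∑ l, R i j k l * J j i * J l k) := by
    calc (∑ i, ∑ j, ∑ k, ∑ l, R j k i l * J j k * J l i)
        = ∑ i, ∑ j, ∑ k, ∑ l, R i j k l * J i j * J l k :=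
          permA (f := fun a b c d => R a b c d * J a b * J d c)
      _ = ∑ i, ∑ j, ∑ k, ∑ l, -(R i j k l * J j i * J l k) := by
          refine Finset.sum_congr rfl fun i _ => Finset.sum_congr rfl fun j _ =>
            Finset.sum_congr rfl fun k _ => Finset.sum_congr rfl fun l _ => ?_
          rw [entry_anti J hJorth hJsq i j]
          ring
      _ = _ := by simp only [Finset.sum_neg_distrib]
  have hsplit : (∑ i, ∑ j, ∑ k, ∑ l, R i j k l * J j k * J l i)
      = (∑ i, ∑ j, ∑ k, ∑ l, -(R j k i l * J j k * J l i))
        + ∑ i, ∑ j, ∑ k, ∑ l, -(R k i j l * J j k * J l i) := by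
    simp only [← Finset.sum_add_distrib]
    refine Finset.sum_congr rfl fun i _ => Finset.sum_congr rfl fun j _ =>
      Finset.sum_congr rfl fun k _ => Finset.sum_congr rfl fun l _ => ?_
    rw [show R i j k l = -R j k i l - R k i j l from by linarith [hbianchi i j k l]]
    ring
  rw [hsplit]
  simp only [Finset.sum_neg_distrib]
  rw [hC, hE_lemma R J hJorth hJsq h11, hS1_lemma R J hasym1 hbianchi hJorth hJsq h11]
  ring

lemma main_algebra
    (hasym1 : ∀ i j k l, R i j k l = - R j i k l)
    (hbianchi : ∀ i j k l, R i j k l + R j k i l + R k i j l = 0)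
    (hJorth : J.transpose * J = 1) (hJsq : J * J = -1)
    (h11 : ∀ i j k l, (∑ a, ∑ b, J a i * J b j * R a b k l) = R i j k l) :
    (∑ i, ∑ j, ∑ k, ∑ l, ∑ m, ∑ m', R i j k l * J j m * J l m' *
       ((if i = m then (1:ℝ) else 0) * (if k = m' then 1 else 0) +
        (if i = k then (1:ℝ) else 0) * (if m = m' then 1 else 0) +
        (if i = m' then (1:ℝ) else 0) * (if m = k then 1 else 0)))
    = 4 * ∑ j, ∑ k, R j k j k := by
  simp only [mul_add, Finset.sum_add_distrib, ite_mul, mul_ite, one_mul, zero_mul, mul_one,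
    mul_zero, Finset.sum_ite_irrel, Finset.sum_const_zero, Finset.sum_ite_eq,
    Finset.sum_ite_eq', Finset.mem_univ, if_true]
  rw [hS1_lemma R J hasym1 hbianchi hJorth hJsq h11, hS2_lemma R J hJorth,
    hS3_lemma R J hasym1 hbianchi hJorth hJsq h11]
  ring
end Alg

end Stmt5Aux

open Stmt5Aux

/-- Equation (0d13) of the paper: for a curvature-type tensor `R` (with the symmetries of a
Riemannian curvature tensor) of type (1,1) with respect to an orthogonal complex structure
`J` on `ℝ^{2n}`, the Gaussian integral of `⟨R(Z,JZ)Z,JZ⟩` equals `−4(2π)^n r`, where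
`r = −Σ_{j,k}⟨R(e_j,e_k)e_j,e_k⟩`. Here `R i j k l = ⟨R(e_i,e_j)e_k,e_l⟩`. -/
theorem stmt_5 (n : ℕ) (R : Fin (2 * n) → Fin (2 * n) → Fin (2 * n) → Fin (2 * n) → ℝ)
    (J : Matrix (Fin (2 * n)) (Fin (2 * n)) ℝ)
    (hasym1 : ∀ i j k l, R i j k l = - R j i k l)
    (hasym2 : ∀ i j k l, R i j k l = - R i j l k)
    (hpair : ∀ i j k l, R i j k l = R k l i j)
    (hbianchi : ∀ i j k l, R i j k l + R j k i l + R k i j l = 0)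
    (hJorth : J.transpose * J = 1)
    (hJsq : J * J = -1)
    (h11 : ∀ i j k l, (∑ a, ∑ b, J a i * J b j * R a b k l) = R i j k l) :
    (∫ Z : EuclideanSpace ℝ (Fin (2 * n)),
        (∑ i, ∑ j, ∑ k, ∑ l,
            R i j k l * Z i * (∑ m, J j m * Z m) * Z k * (∑ m, J l m * Z m)) *
          Real.exp (-‖Z‖ ^ 2 / 2)) =
      -4 * (2 * Real.pi) ^ n * (-(∑ j, ∑ k, R j k j k)) := by
  classical
  have expand : ∀ Z : EuclideanSpace ℝ (Fin (2 * n)),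
      (∑ i, ∑ j, ∑ k, ∑ l,
          R i j k l * Z i * (∑ m, J j m * Z m) * Z k * (∑ m, J l m * Z m)) *
        Real.exp (-‖Z‖ ^ 2 / 2)
      = ∑ p : Fin (2 * n) × Fin (2 * n) × Fin (2 * n) × Fin (2 * n) × Fin (2 * n) × Fin (2 * n),
          (R p.1 p.2.1 p.2.2.1 p.2.2.2.1 * J p.2.1 p.2.2.2.2.1 * J p.2.2.2.1 p.2.2.2.2.2) *
            ((Z p.1 * Z p.2.2.2.2.1 * Z p.2.2.1 * Z p.2.2.2.2.2) *
              Real.exp (-‖Z‖ ^ 2 / 2)) := by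
    intro Z
    simp only [Fintype.sum_prod_type]
    simp only [Finset.sum_mul, Finset.mul_sum]
    refine Finset.sum_congr rfl fun i _ => Finset.sum_congr rfl fun j _ =>
      Finset.sum_congr rfl fun k _ => Finset.sum_congr rfl fun l _ => ?_
    rw [Finset.sum_comm]
    refine Finset.sum_congr rfl fun m _ => Finset.sum_congr rfl fun m' _ => ?_
    ring
  have h1 : (∫ Z : EuclideanSpace ℝ (Fin (2 * n)),
      (∑ i, ∑ j, ∑ k, ∑ l,
          R i j k l * Z i * (∑ m, J j m * Z m) * Z k * (∑ m, J l m * Z m)) *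
        Real.exp (-‖Z‖ ^ 2 / 2))
      = ∫ Z : EuclideanSpace ℝ (Fin (2 * n)), ∑ p : Fin (2 * n) × Fin (2 * n) × Fin (2 * n) × Fin (2 * n) × Fin (2 * n) × Fin (2 * n),
          (R p.1 p.2.1 p.2.2.1 p.2.2.2.1 * J p.2.1 p.2.2.2.2.1 * J p.2.2.2.1 p.2.2.2.2.2) *
            ((Z p.1 * Z p.2.2.2.2.1 * Z p.2.2.1 * Z p.2.2.2.2.2) *
              Real.exp (-‖Z‖ ^ 2 / 2)) :=
    integral_congr_ae (Filter.Eventually.of_forall expand)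
  rw [h1, integral_finset_sum _
    (fun p _ => (integrable_mono4_euclid p.1 p.2.2.2.2.1 p.2.2.1 p.2.2.2.2.2).const_mul _)]
  have h2 : ∀ p ∈ (Finset.univ : Finset (Fin (2 * n) × Fin (2 * n) × Fin (2 * n) × Fin (2 * n) × Fin (2 * n) × Fin (2 * n))),
      (∫ Z : EuclideanSpace ℝ (Fin (2 * n)),
        (R p.1 p.2.1 p.2.2.1 p.2.2.2.1 * J p.2.1 p.2.2.2.2.1 * J p.2.2.2.1 p.2.2.2.2.2) *
          ((Z p.1 * Z p.2.2.2.2.1 * Z p.2.2.1 * Z p.2.2.2.2.2) * Real.exp (-‖Z‖ ^ 2 / 2)))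
      = Real.sqrt (2 * Real.pi) ^ (2 * n) *
          ((R p.1 p.2.1 p.2.2.1 p.2.2.2.1 * J p.2.1 p.2.2.2.2.1 * J p.2.2.2.1 p.2.2.2.2.2) *
            ((if p.1 = p.2.2.2.2.1 then (1:ℝ) else 0) *
                (if p.2.2.1 = p.2.2.2.2.2 then (1:ℝ) else 0) +
              (if p.1 = p.2.2.1 then (1:ℝ) else 0) *
                (if p.2.2.2.2.1 = p.2.2.2.2.2 then (1:ℝ) else 0) +
              (if p.1 = p.2.2.2.2.2 then (1:ℝ) else 0) *
                (if p.2.2.2.2.1 = p.2.2.1 then (1:ℝ) else 0))) := by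
    intro p _
    rw [MeasureTheory.integral_const_mul, euclid_mom p.1 p.2.2.2.2.1 p.2.2.1 p.2.2.2.2.2]
    ring
  rw [Finset.sum_congr rfl h2, ← Finset.mul_sum]
  have h4 : (∑ p : Fin (2 * n) × Fin (2 * n) × Fin (2 * n) × Fin (2 * n) × Fin (2 * n) × Fin (2 * n),
      (R p.1 p.2.1 p.2.2.1 p.2.2.2.1 * J p.2.1 p.2.2.2.2.1 * J p.2.2.2.1 p.2.2.2.2.2) *
        ((if p.1 = p.2.2.2.2.1 then (1:ℝ) else 0) *
            (if p.2.2.1 = p.2.2.2.2.2 then (1:ℝ) else 0) +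
          (if p.1 = p.2.2.1 then (1:ℝ) else 0) *
            (if p.2.2.2.2.1 = p.2.2.2.2.2 then (1:ℝ) else 0) +
          (if p.1 = p.2.2.2.2.2 then (1:ℝ) else 0) *
            (if p.2.2.2.2.1 = p.2.2.1 then (1:ℝ) else 0)))
      = ∑ i, ∑ j, ∑ k, ∑ l, ∑ m, ∑ m', R i j k l * J j m * J l m' *
         ((if i = m then (1:ℝ) else 0) * (if k = m' then 1 else 0) +
          (if i = k then (1:ℝ) else 0) * (if m = m' then 1 else 0) +
          (if i = m' then (1:ℝ) else 0) * (if m = k then 1 else 0)) := by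
    simp only [Fintype.sum_prod_type]
  rw [h4, main_algebra R J hasym1 hbianchi hJorth hJsq h11]
  have h5 : Real.sqrt (2 * Real.pi) ^ (2 * n) = (2 * Real.pi) ^ n := by
    rw [pow_mul, Real.sq_sqrt (by positivity)]
  rw [h5]
  ring
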